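/- Supermodularity of quadratics in the dual Graver cone: Let f(x) = x^T V x + w^T x + a with V ∈ Q*(A). Let x ∈ ℝ^n, let g_1, …, g_t be distinct elements of the Graver basis G(A) pairwise lying in the same orthant, and μ_1, …, μ_t ≥ 0. Then f(x + Σ_i μ_i g_i) − f(x) ≥ Σ_i (f(x + μ_i g_i) − f(x)). -/
import Mathlib


open Matrix BigOperators

/-- The conformal order on `ℤ^n`. -/
def ConformalLE {n : ℕ} (x y : Fin n → ℤ) : Prop :=
  ∀ i, 0 ≤ x i * y i ∧ |x i| ≤ |y i|

/-- The Graver basis of an integer matrix `A`: the `⊑`-minimal elements of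
`{x ∈ ℤ^n : Ax = 0, x ≠ 0}`. -/
def graverBasis {m n : ℕ} (A : Matrix (Fin m) (Fin n) ℤ) : Set (Fin n → ℤ) :=
  {g | g ≠ 0 ∧ A.mulVec g = 0 ∧
    ∀ y : Fin n → ℤ, y ≠ 0 → A.mulVec y = 0 → ConformalLE y g → y = g}

/-- Cast an integer vector to a real vector. -/
def castVec {n : ℕ} (g : Fin n → ℤ) : Fin n → ℝ := fun i => (g i : ℝ)

/-- The cone generated by a set: all nonnegative finite linear combinations. -/
def coneGen {E : Type*} [AddCommMonoid E] [SMul ℝ E] (S : Set E) : Set E :=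
  {x | ∃ (k : ℕ) (μ : Fin k → ℝ) (v : Fin k → E),
    (∀ i, 0 ≤ μ i) ∧ (∀ i, v i ∈ S) ∧ x = ∑ i, μ i • v i}

/-- Generators of the quadratic Graver cone:  `g hᵀ + h gᵀ` over distinct
Graver basis elements in the same orthant. -/
def quadGravGens {m n : ℕ} (A : Matrix (Fin m) (Fin n) ℤ) :
    Set (Matrix (Fin n) (Fin n) ℝ) :=
  {M | ∃ g h : Fin n → ℤ, g ∈ graverBasis A ∧ h ∈ graverBasis A ∧ g ≠ h ∧
    (∀ i, 0 ≤ g i * h i) ∧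
    M = vecMulVec (castVec g) (castVec h) + vecMulVec (castVec h) (castVec g)}

/-- The quadratic Graver cone `Q(A)`. -/
def quadGraverCone {m n : ℕ} (A : Matrix (Fin m) (Fin n) ℤ) :
    Set (Matrix (Fin n) (Fin n) ℝ) :=
  coneGen (quadGravGens A)

/-- Generators of the diagonal Graver cone: pointwise products `g ∘ h`. -/
def diagGravGens {m n : ℕ} (A : Matrix (Fin m) (Fin n) ℤ) : Set (Fin n → ℝ) :=
  {v | ∃ g h : Fin n → ℤ, g ∈ graverBasis A ∧ h ∈ graverBasis A ∧ g ≠ h ∧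
    (∀ i, 0 ≤ g i * h i) ∧ v = castVec g * castVec h}

/-- The diagonal Graver cone `D(A)`. -/
def diagGraverCone {m n : ℕ} (A : Matrix (Fin m) (Fin n) ℤ) : Set (Fin n → ℝ) :=
  coneGen (diagGravGens A)

/-- The Frobenius inner product of two matrices. -/
def frob {n : ℕ} (U V : Matrix (Fin n) (Fin n) ℝ) : ℝ := ∑ i, ∑ j, U i j * V i j

/-- The dual quadratic Graver cone `Q*(A)` (within symmetric matrices). -/
def dualQuadGraverCone {m n : ℕ} (A : Matrix (Fin m) (Fin n) ℤ) :
    Set (Matrix (Fin n) (Fin n) ℝ) :=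
  {V | V.IsSymm ∧ ∀ U ∈ quadGraverCone A, 0 ≤ frob U V}

/-- The dual diagonal Graver cone `D*(A)`. -/
def dualDiagGraverCone {m n : ℕ} (A : Matrix (Fin m) (Fin n) ℤ) :
    Set (Fin n → ℝ) :=
  {v | ∀ u ∈ diagGraverCone A, 0 ≤ u ⬝ᵥ v}

lemma sum_dotProduct' {n t : ℕ} (c : Fin t → (Fin n → ℝ)) (v : Fin n → ℝ) :
    (∑ r, c r) ⬝ᵥ v = ∑ r, c r ⬝ᵥ v := by
  simp [dotProduct, Finset.sum_mul, Finset.sum_apply]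
  exact Finset.sum_comm

lemma dotProduct_sum' {n t : ℕ} (c : Fin t → (Fin n → ℝ)) (v : Fin n → ℝ) :
    v ⬝ᵥ (∑ r, c r) = ∑ r, v ⬝ᵥ c r := by
  simp [dotProduct, Finset.mul_sum, Finset.sum_apply]
  exact Finset.sum_comm

lemma mulVec_sum' {n t : ℕ} (V : Matrix (Fin n) (Fin n) ℝ) (c : Fin t → (Fin n → ℝ)) :
    V.mulVec (∑ r, c r) = ∑ r, V.mulVec (c r) := by
  funext i
  simp [Matrix.mulVec, dotProduct, Finset.mul_sum, Finset.sum_apply]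
  exact Finset.sum_comm

/-- Supermodularity of quadratics whose matrix lies in the dual quadratic
Graver cone, on conformal sums of Graver basis elements. -/
theorem quadratic_supermodular {m n : ℕ} (A : Matrix (Fin m) (Fin n) ℤ)
    (V : Matrix (Fin n) (Fin n) ℝ) (hV : V ∈ dualQuadGraverCone A)
    (w : Fin n → ℝ) (a : ℝ)
    (f : (Fin n → ℝ) → ℝ) (hf : ∀ x, f x = x ⬝ᵥ V.mulVec x + w ⬝ᵥ x + a)
    (x : Fin n → ℝ) (t : ℕ) (g : Fin t → (Fin n → ℤ))
    (hg : ∀ r, g r ∈ graverBasis A) (hdist : Function.Injective g)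
    (horth : ∀ r s, ∀ i, 0 ≤ g r i * g s i)
    (μ : Fin t → ℝ) (hμ : ∀ r, 0 ≤ μ r) :
    ∑ r, (f (x + μ r • castVec (g r)) - f x) ≤
      f (x + ∑ r, μ r • castVec (g r)) - f x := by
  classical
  set c : Fin t → (Fin n → ℝ) := fun r => μ r • castVec (g r) with hc
  have hexp : ∀ u : Fin n → ℝ, f (x + u) - f x =
      u ⬝ᵥ V.mulVec u + x ⬝ᵥ V.mulVec u + u ⬝ᵥ V.mulVec x + w ⬝ᵥ u := by
    intro u
    rw [hf, hf, Matrix.mulVec_add, dotProduct_add, add_dotProduct, add_dotProduct,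
      dotProduct_add]
    ring
  set B : Fin t → Fin t → ℝ := fun r s => c r ⬝ᵥ V.mulVec (c s) with hB
  have key : ∀ r s, r ≠ s → 0 ≤ B r s + B s r := by
    intro r s hrs
    have hne : g r ≠ g s := fun h => hrs (hdist h)
    obtain ⟨hsym, hpos⟩ := hV
    set U : Matrix (Fin n) (Fin n) ℝ :=
      vecMulVec (castVec (g r)) (castVec (g s)) +
        vecMulVec (castVec (g s)) (castVec (g r)) with hUdef
    have hU : U ∈ quadGraverCone A := by
      refine ⟨1, fun _ => 1, fun _ => U, fun _ => zero_le_one, fun _ =>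
        ⟨g r, g s, hg r, hg s, hne, horth r s, hUdef⟩, by simp⟩
    have h0 := hpos _ hU
    have hfr : frob U V =
        castVec (g r) ⬝ᵥ V.mulVec (castVec (g s)) +
          castVec (g s) ⬝ᵥ V.mulVec (castVec (g r)) := by
      simp only [frob, hUdef, Matrix.add_apply, vecMulVec_apply, dotProduct,
        Matrix.mulVec]
      rw [← Finset.sum_add_distrib]
      refine Finset.sum_congr rfl fun i _ => ?_
      rw [Finset.mul_sum, Finset.mul_sum, ← Finset.sum_add_distrib]
      exact Finset.sum_congr rfl fun j _ => by ring
    have hBeq : B r s + B s r = μ r * μ s *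
        (castVec (g r) ⬝ᵥ V.mulVec (castVec (g s)) +
          castVec (g s) ⬝ᵥ V.mulVec (castVec (g r))) := by
      simp only [hB, hc, Matrix.mulVec_smul, smul_dotProduct, dotProduct_smul,
        smul_eq_mul]
      ring
    rw [hBeq]
    exact mul_nonneg (mul_nonneg (hμ r) (hμ s)) (hfr ▸ h0)
  have hdouble : ∑ r, ∑ s, B r s =
      ∑ r, B r r + ∑ r, ∑ s ∈ Finset.univ.erase r, B r s := by
    rw [← Finset.sum_add_distrib]
    exact Finset.sum_congr rfl fun r _ =>
      (Finset.add_sum_erase _ _ (Finset.mem_univ r)).symm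
  have hdouble2 : ∑ r, ∑ s, B s r =
      ∑ r, B r r + ∑ r, ∑ s ∈ Finset.univ.erase r, B s r := by
    rw [← Finset.sum_add_distrib]
    exact Finset.sum_congr rfl fun r _ =>
      (Finset.add_sum_erase _ (fun s => B s r) (Finset.mem_univ r)).symm
  have hcomm : ∑ r, ∑ s, B r s = ∑ r, ∑ s, B s r := Finset.sum_comm
  have hTsymm : ∑ r, ∑ s ∈ Finset.univ.erase r, B r s =
      ∑ r, ∑ s ∈ Finset.univ.erase r, B s r := by linarith
  have hT : 0 ≤ ∑ r, ∑ s ∈ Finset.univ.erase r, B r s := by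
    have h2 : 0 ≤ ∑ r, ∑ s ∈ Finset.univ.erase r, (B r s + B s r) := by
      refine Finset.sum_nonneg fun r _ => Finset.sum_nonneg fun s hs => ?_
      exact key r s (Ne.symm (Finset.ne_of_mem_erase hs))
    have h3 : ∑ r, ∑ s ∈ Finset.univ.erase r, (B r s + B s r) =
        ∑ r, ∑ s ∈ Finset.univ.erase r, B r s +
          ∑ r, ∑ s ∈ Finset.univ.erase r, B s r := by
      rw [← Finset.sum_add_distrib]
      exact Finset.sum_congr rfl fun r _ => Finset.sum_add_distrib
    linarith
  have hdiag : ∑ r, B r r ≤ ∑ r, ∑ s, B r s := by linarith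
  have hlhs : ∑ r, (f (x + c r) - f x) =
      ∑ r, B r r + ∑ r, x ⬝ᵥ V.mulVec (c r) + ∑ r, c r ⬝ᵥ V.mulVec x +
        ∑ r, w ⬝ᵥ c r := by
    rw [← Finset.sum_add_distrib, ← Finset.sum_add_distrib, ← Finset.sum_add_distrib]
    exact Finset.sum_congr rfl fun r _ => hexp (c r)
  have hrhs : f (x + ∑ r, c r) - f x =
      ∑ r, ∑ s, B r s + ∑ r, x ⬝ᵥ V.mulVec (c r) + ∑ r, c r ⬝ᵥ V.mulVec x +
        ∑ r, w ⬝ᵥ c r := by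
    rw [hexp]
    simp only [mulVec_sum', dotProduct_sum', sum_dotProduct']
    rw [hcomm]
  rw [hlhs, hrhs]
  linarith
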